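/- Let (Ω, F, P) be a probability space and let S : Ω → ℝ be a measurable random variable with S ≥ 0 almost surely. Then for every ε ∈ (0,1), the identity E[S^{ε}] = (ε/Γ(1−ε)) ∫_0^∞ t^{−ε−1} (1 − E[e^{−t S}]) dt holds as an equality of values in [0,∞], where both sides may be infinite. -/

import Mathlib

open MeasureTheory Set ENNReal

lemma lint_rpow {a c : ℝ} (ha : a < -1) (hc : 0 < c) :
    ∫⁻ t in Ioi c, ENNReal.ofReal (t ^ a) = ENNReal.ofReal (-c ^ (a + 1) / (a + 1)) := by
  rw [← integral_Ioi_rpow_of_lt ha hc,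
    ofReal_integral_eq_lintegral_ofReal (integrableOn_Ioi_rpow_of_lt ha hc)]
  filter_upwards [ae_restrict_mem measurableSet_Ioi] with x hx
  exact Real.rpow_nonneg (hc.trans hx).le a

lemma lint_exp {c : ℝ} (hc : 0 ≤ c) :
    ∫⁻ v in Ioc (0:ℝ) c, ENNReal.ofReal (Real.exp (-v)) = ENNReal.ofReal (1 - Real.exp (-c)) := by
  have hint : IntegrableOn (fun v => Real.exp (-v)) (Ioc (0:ℝ) c) :=
    (Real.continuous_exp.comp continuous_neg).integrableOn_Ioc
  rw [← ofReal_integral_eq_lintegral_ofReal hint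
    (Filter.Eventually.of_forall fun x => (Real.exp_pos _).le)]
  congr 1
  rw [← intervalIntegral.integral_of_le hc]
  have : (∫ v in (0:ℝ)..c, Real.exp (-v)) = ∫ v in (-c)..(0:ℝ), Real.exp v := by
    simp [intervalIntegral.integral_comp_neg (a := 0) (b := c) (fun v => Real.exp v)]
  rw [this, integral_exp]
  simp

lemma key {ε : ℝ} (hε : ε ∈ Ioo (0:ℝ) 1) {s : ℝ} (hs : 0 ≤ s) :
    ∫⁻ t in Ioi (0:ℝ), ENNReal.ofReal (t ^ (-ε - 1)) * ENNReal.ofReal (1 - Real.exp (-t * s)) =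
      ENNReal.ofReal (Real.Gamma (1 - ε) / ε) * ENNReal.ofReal (s ^ ε) := by
  obtain ⟨hε0, hε1⟩ := hε
  rcases hs.eq_or_lt with h0 | hs
  · simp [← h0, Real.zero_rpow hε0.ne']
  -- s > 0
  have ha : (-ε - 1 : ℝ) < -1 := by linarith
  -- step 1 : rewrite inner factor as an integral
  have step1 : ∀ t ∈ Ioi (0:ℝ),
      ENNReal.ofReal (t ^ (-ε - 1)) * ENNReal.ofReal (1 - Real.exp (-t * s)) =
      ∫⁻ v in Ioi (0:ℝ), ENNReal.ofReal (t ^ (-ε - 1)) * ENNReal.ofReal (Real.exp (-v)) *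
        ({q : ℝ × ℝ | q.2 ≤ q.1 * s}.indicator 1 (t, v)) := by
    intro t ht
    have hts : 0 ≤ t * s := mul_nonneg (le_of_lt ht) hs.le
    have : (fun v => ENNReal.ofReal (t ^ (-ε - 1)) * ENNReal.ofReal (Real.exp (-v)) *
        ({q : ℝ × ℝ | q.2 ≤ q.1 * s}.indicator 1 (t, v))) =
        fun v => (Iic (t*s)).indicator
          (fun v => ENNReal.ofReal (t ^ (-ε - 1)) * ENNReal.ofReal (Real.exp (-v))) v := by
      funext v
      by_cases hv : v ≤ t * s
      · simp [Set.indicator_of_mem, hv, Set.mem_Iic.mpr hv, Set.mem_setOf_eq]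
      · simp [Set.indicator_of_notMem, hv, Set.mem_Iic, Set.mem_setOf_eq]
    rw [this, lintegral_indicator measurableSet_Iic _, Measure.restrict_restrict measurableSet_Iic,
      show Iic (t*s) ∩ Ioi (0:ℝ) = Ioc 0 (t*s) by rw [Set.inter_comm, Set.Ioi_inter_Iic],
      lintegral_const_mul' _ _ ENNReal.ofReal_ne_top, lint_exp hts, neg_mul]
  rw [setLIntegral_congr_fun measurableSet_Ioi step1]
    -- Tonelli swap
  set A := {q : ℝ × ℝ | q.2 ≤ q.1 * s} with hA
  have hAm : MeasurableSet A := measurableSet_le measurable_snd (measurable_fst.mul_const s)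
  have hswap : ∫⁻ t in Ioi (0:ℝ), ∫⁻ v in Ioi (0:ℝ),
      ENNReal.ofReal (t ^ (-ε - 1)) * ENNReal.ofReal (Real.exp (-v)) * (A.indicator 1 (t, v)) =
      ∫⁻ v in Ioi (0:ℝ), ∫⁻ t in Ioi (0:ℝ),
      ENNReal.ofReal (t ^ (-ε - 1)) * ENNReal.ofReal (Real.exp (-v)) * (A.indicator 1 (t, v)) := by
    apply lintegral_lintegral_swap
    apply Measurable.aemeasurable
    exact (((measurable_fst.pow_const _).ennreal_ofReal).mul
      ((measurable_snd.neg.exp).ennreal_ofReal)).mul (measurable_const.indicator hAm)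
  rw [hswap]
  -- inner integral over t
  have step2 : ∀ v ∈ Ioi (0:ℝ),
      (∫⁻ t in Ioi (0:ℝ),
        ENNReal.ofReal (t ^ (-ε - 1)) * ENNReal.ofReal (Real.exp (-v)) * (A.indicator 1 (t, v)))
      = ENNReal.ofReal (s ^ ε / ε) * ENNReal.ofReal (Real.exp (-v) * v ^ (-ε)) := by
    intro v hv
    have hv : (0:ℝ) < v := hv
    have hvs : 0 < v / s := div_pos hv hs
    have heq : (fun t => ENNReal.ofReal (t ^ (-ε - 1)) * ENNReal.ofReal (Real.exp (-v)) *
        (A.indicator 1 (t, v))) =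
        fun t => (Ici (v/s)).indicator
          (fun t => ENNReal.ofReal (t ^ (-ε - 1)) * ENNReal.ofReal (Real.exp (-v))) t := by
      funext t
      by_cases h : v ≤ t * s
      · have : v / s ≤ t := (div_le_iff₀ hs).mpr (by linarith [h])
        simp [hA, Set.indicator_of_mem, h, this, Set.mem_Ici, Set.mem_setOf_eq]
      · have : ¬ (v / s ≤ t) := fun hc => h (by rw [div_le_iff₀ hs] at hc; linarith)
        simp [hA, Set.indicator_of_notMem, h, this, Set.mem_Ici, Set.mem_setOf_eq]
    rw [heq, lintegral_indicator measurableSet_Ici,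
      Measure.restrict_restrict measurableSet_Ici,
      show Ici (v/s) ∩ Ioi (0:ℝ) = Ici (v/s) from
        Set.inter_eq_left.mpr (fun x hx => lt_of_lt_of_le hvs hx),
      ← Measure.restrict_congr_set Ioi_ae_eq_Ici,
      lintegral_mul_const' _ _ ENNReal.ofReal_ne_top, lint_rpow ha hvs]
    rw [show (-ε - 1 + 1 : ℝ) = -ε by ring, neg_div_neg_eq]
    rw [← ENNReal.ofReal_mul (by positivity), ← ENNReal.ofReal_mul (by positivity)]
    congr 1
    have hvrw : (v/s) ^ (-ε) = v ^ (-ε) * s ^ ε := by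
      rw [Real.div_rpow hv.le hs.le, Real.rpow_neg hs.le]
      field_simp
    rw [hvrw]; ring
  rw [setLIntegral_congr_fun measurableSet_Ioi step2,
    lintegral_const_mul' _ _ ENNReal.ofReal_ne_top]
  have hgamma : ∫⁻ v in Ioi (0:ℝ), ENNReal.ofReal (Real.exp (-v) * v ^ (-ε)) =
      ENNReal.ofReal (Real.Gamma (1 - ε)) := by
    rw [Real.Gamma_eq_integral (by linarith : (0:ℝ) < 1 - ε)]
    rw [ofReal_integral_eq_lintegral_ofReal (Real.GammaIntegral_convergent (by linarith))]
    · simp_rw [show (1 - ε - 1 : ℝ) = -ε by ring]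
    · filter_upwards [ae_restrict_mem measurableSet_Ioi] with x hx
      exact mul_nonneg (Real.exp_nonneg _) (Real.rpow_nonneg (le_of_lt hx) _)
  have hΓ : 0 < Real.Gamma (1 - ε) := Real.Gamma_pos_of_pos (by linarith)
  rw [hgamma, ← ENNReal.ofReal_mul (by positivity),
    ← ENNReal.ofReal_mul (div_nonneg hΓ.le hε0.le)]
  congr 1
  ring

theorem stmt3 {Ω : Type*} [MeasurableSpace Ω] (P : Measure Ω) [IsProbabilityMeasure P]
    (S : Ω → ℝ) (hS : Measurable S) (hSnonneg : ∀ᵐ ω ∂P, 0 ≤ S ω)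
    (ε : ℝ) (hε : ε ∈ Set.Ioo (0:ℝ) 1) :
    ∫⁻ ω, ENNReal.ofReal (S ω ^ ε) ∂P =
      (ENNReal.ofReal ε / ENNReal.ofReal (Real.Gamma (1 - ε))) *
        ∫⁻ t in Set.Ioi (0:ℝ),
          ENNReal.ofReal (t ^ (-ε - 1)) *
            (1 - ∫⁻ ω, ENNReal.ofReal (Real.exp (-t * S ω)) ∂P) := by
  obtain ⟨hε0, hε1⟩ := hε
  have hΓ : 0 < Real.Gamma (1 - ε) := Real.Gamma_pos_of_pos (by linarith)
  have stepA : ∀ t ∈ Ioi (0:ℝ),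
      ENNReal.ofReal (t ^ (-ε - 1)) * (1 - ∫⁻ ω, ENNReal.ofReal (Real.exp (-t * S ω)) ∂P) =
      ∫⁻ ω, ENNReal.ofReal (t ^ (-ε - 1)) * ENNReal.ofReal (1 - Real.exp (-t * S ω)) ∂P := by
    intro t ht
    have ht : (0:ℝ) < t := ht
    have hmeas : Measurable fun ω => ENNReal.ofReal (Real.exp (-t * S ω)) :=
      ((hS.const_mul (-t)).exp).ennreal_ofReal
    have hle : ∀ᵐ ω ∂P, ENNReal.ofReal (Real.exp (-t * S ω)) ≤ (fun _ => (1:ℝ≥0∞)) ω := by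
      filter_upwards [hSnonneg] with ω hω
      have : Real.exp (-t * S ω) ≤ 1 := by
        rw [Real.exp_le_one_iff]
        nlinarith
      calc ENNReal.ofReal (Real.exp (-t * S ω)) ≤ ENNReal.ofReal 1 :=
            ENNReal.ofReal_le_ofReal this
        _ = 1 := by simp
    have hne : ∫⁻ ω, ENNReal.ofReal (Real.exp (-t * S ω)) ∂P ≠ ⊤ := by
      apply ne_of_lt
      calc ∫⁻ ω, ENNReal.ofReal (Real.exp (-t * S ω)) ∂P
          ≤ ∫⁻ _, (1:ℝ≥0∞) ∂P := lintegral_mono_ae hle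
        _ = 1 := by simp
        _ < ⊤ := ENNReal.one_lt_top
    have hsub : ∫⁻ ω, ENNReal.ofReal (1 - Real.exp (-t * S ω)) ∂P
        = 1 - ∫⁻ ω, ENNReal.ofReal (Real.exp (-t * S ω)) ∂P := by
      have heq : (fun ω => ENNReal.ofReal (1 - Real.exp (-t * S ω))) =
          fun ω => 1 - ENNReal.ofReal (Real.exp (-t * S ω)) := by
        funext ω
        rw [ENNReal.ofReal_sub _ (Real.exp_nonneg _)]
        simp
      rw [heq, lintegral_sub hmeas hne hle]
      simp
    rw [lintegral_const_mul' _ _ ENNReal.ofReal_ne_top, hsub]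
  rw [setLIntegral_congr_fun measurableSet_Ioi stepA]
  have hswap : ∫⁻ t in Ioi (0:ℝ), ∫⁻ ω,
      ENNReal.ofReal (t ^ (-ε - 1)) * ENNReal.ofReal (1 - Real.exp (-t * S ω)) ∂P
      = ∫⁻ ω, (∫⁻ t in Ioi (0:ℝ),
      ENNReal.ofReal (t ^ (-ε - 1)) * ENNReal.ofReal (1 - Real.exp (-t * S ω))) ∂P := by
    apply lintegral_lintegral_swap
    apply Measurable.aemeasurable
    exact ((measurable_fst.pow_const _).ennreal_ofReal).mul
      ((measurable_const.sub
        ((measurable_fst.neg.mul (hS.comp measurable_snd)).exp)).ennreal_ofReal)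
  rw [hswap]
  have hae : ∀ᵐ ω ∂P, (∫⁻ t in Ioi (0:ℝ),
      ENNReal.ofReal (t ^ (-ε - 1)) * ENNReal.ofReal (1 - Real.exp (-t * S ω)))
      = ENNReal.ofReal (Real.Gamma (1 - ε) / ε) * ENNReal.ofReal (S ω ^ ε) := by
    filter_upwards [hSnonneg] with ω hω
    exact key ⟨hε0, hε1⟩ hω
  rw [lintegral_congr_ae hae, lintegral_const_mul' _ _ ENNReal.ofReal_ne_top, ← mul_assoc]
  have hc : (ENNReal.ofReal ε / ENNReal.ofReal (Real.Gamma (1 - ε))) *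
      ENNReal.ofReal (Real.Gamma (1 - ε) / ε) = 1 := by
    have h1 : ENNReal.ofReal ε ≠ 0 := (ENNReal.ofReal_pos.mpr hε0).ne'
    have h2 : ENNReal.ofReal (Real.Gamma (1 - ε)) ≠ 0 := (ENNReal.ofReal_pos.mpr hΓ).ne'
    rw [ENNReal.ofReal_div_of_pos hε0, div_eq_mul_inv, div_eq_mul_inv,
      show ENNReal.ofReal ε * (ENNReal.ofReal (Real.Gamma (1 - ε)))⁻¹ *
        (ENNReal.ofReal (Real.Gamma (1 - ε)) * (ENNReal.ofReal ε)⁻¹) =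
        (ENNReal.ofReal ε * (ENNReal.ofReal ε)⁻¹) *
        (ENNReal.ofReal (Real.Gamma (1 - ε)) * (ENNReal.ofReal (Real.Gamma (1 - ε)))⁻¹) by ring,
      ENNReal.mul_inv_cancel h1 ENNReal.ofReal_ne_top,
      ENNReal.mul_inv_cancel h2 ENNReal.ofReal_ne_top, one_mul]
  rw [hc, one_mul]
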